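/- For the Lie algebra L⁵, the coefficient α₃ of X₃ is invariant under the adjoint action Ad(exp(εXᵢ)) for all i = 1,...,5 and all ε ∈ ℝ. -/

import Mathlib

/-- Bracket of the 5-dimensional Lie algebra L⁵ in coordinates with respect to the
    basis X₁,…,X₅ (indices 0,…,4): the nonzero basis brackets are
    [X₁,X₂] = -X₂, [X₁,X₄] = -γX₄, [X₁,X₅] = -γX₅, [X₃,X₄] = X₅, [X₃,X₅] = -X₄. -/
def br (γ : ℝ) (a b : Fin 5 → ℝ) : Fin 5 → ℝ :=
  ![0,
    -(a 0 * b 1 - a 1 * b 0),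
    0,
    -γ * (a 0 * b 3 - a 3 * b 0) - (a 2 * b 4 - a 4 * b 2),
    -γ * (a 0 * b 4 - a 4 * b 0) + (a 2 * b 3 - a 3 * b 2)]

/-- Matrix of ad(X), ad(X)(Y) = [X,Y], in the basis X₁,…,X₅. -/
def adM (γ : ℝ) (a : Fin 5 → ℝ) : Matrix (Fin 5) (Fin 5) ℝ :=
  fun i j => br γ a (Pi.single j 1) i

/-- The adjoint action Ad(exp(εY)) = exp(-ε ad(Y)) on coordinates. -/
noncomputable def AdExp (γ ε : ℝ) (Y : Fin 5 → ℝ) : (Fin 5 → ℝ) → (Fin 5 → ℝ) :=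
  fun a => Matrix.mulVec (NormedSpace.exp ((-ε) • adM γ Y)) a

/-- If the third row of `M` vanishes, the third row of `exp M` is that of the identity. -/
lemma exp_row_two (M : Matrix (Fin 5) (Fin 5) ℝ) (h : M 2 = 0) :
    NormedSpace.exp M 2 = (1 : Matrix (Fin 5) (Fin 5) ℝ) 2 := by
  letI : SeminormedRing (Matrix (Fin 5) (Fin 5) ℝ) := Matrix.linftyOpSemiNormedRing
  letI : NormedRing (Matrix (Fin 5) (Fin 5) ℝ) := Matrix.linftyOpNormedRing
  letI : NormedAlgebra ℝ (Matrix (Fin 5) (Fin 5) ℝ) := Matrix.linftyOpNormedAlgebra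
  have hsum : Summable fun n : ℕ => ((n.factorial : ℝ)⁻¹) • M ^ n :=
    NormedSpace.expSeries_summable' (𝕂 := ℝ) M
  have hs : HasSum (fun n : ℕ => ((n.factorial : ℝ)⁻¹) • M ^ n) (NormedSpace.exp M) := by
    have : NormedSpace.exp M = ∑' n : ℕ, ((n.factorial : ℝ)⁻¹) • M ^ n := by
      rw [NormedSpace.exp_eq_tsum ℝ]
    rw [this]
    exact hsum.hasSum
  funext j
  have hsj : HasSum (fun n : ℕ => (((n.factorial : ℝ)⁻¹) • M ^ n) 2 j)
      (NormedSpace.exp M 2 j) :=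
    hs.map ((Pi.evalAddMonoidHom (fun _ : Fin 5 => ℝ) j).comp
      (Pi.evalAddMonoidHom (fun _ : Fin 5 => Fin 5 → ℝ) 2))
      (((continuous_apply j).comp (continuous_apply (2 : Fin 5))))
  have hzero : ∀ n : ℕ, n ≠ 0 → (((n.factorial : ℝ)⁻¹) • M ^ n) 2 j = 0 := by
    intro n hn
    obtain ⟨k, rfl⟩ := Nat.exists_eq_succ_of_ne_zero hn
    have : (M ^ (k + 1)) 2 j = 0 := by
      rw [pow_succ']
      simp [Matrix.mul_apply, h]
    simp [this]
  have h0 : HasSum (fun n : ℕ => (((n.factorial : ℝ)⁻¹) • M ^ n) 2 j)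
      ((((Nat.factorial 0 : ℝ))⁻¹ • M ^ 0) 2 j) :=
    hasSum_single 0 (fun n hn => hzero n hn)
  have := hsj.unique h0
  simpa using this

/-- The coefficient α₃ of X₃ is invariant under all adjoint actions Ad(exp(εXᵢ)). -/
theorem stmt_11 (γ : ℝ) (i : Fin 5) (ε : ℝ) (α : Fin 5 → ℝ) :
    AdExp γ ε (Pi.single i 1) α 2 = α 2 := by
  have hrow : ((-ε) • adM γ (Pi.single i 1)) 2 = 0 := by
    funext j
    simp [adM, br, Matrix.smul_apply]
  have hexp := exp_row_two _ hrow
  show Matrix.mulVec (NormedSpace.exp ((-ε) • adM γ (Pi.single i 1))) α 2 = α 2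
  rw [Matrix.mulVec, hexp, ← Matrix.mulVec, Matrix.one_mulVec]
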